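/- Let (G, 𝒫, 𝒯) be an instance of Partitioned Vertex Cover and let H be the Popular Matching instance constructed from it. If M is a popular matching in H, then U := {i ∈ V(G) : {a_i, b_i} ∈ M} is a vertex cover of G. -/

import Mathlib

open SimpleGraph

universe u

/-- A matching: a set of edges of `G` that are pairwise vertex-disjoint. -/
def IsMatching {W : Type u} (G : SimpleGraph W) (M : Set (Sym2 W)) : Prop :=
  M ⊆ G.edgeSet ∧ ∀ e ∈ M, ∀ e' ∈ M, e ≠ e' → ∀ v : W, v ∈ e → v ∉ e'

/-- `v` is matched by `M`. -/
def Matched {W : Type u} (M : Set (Sym2 W)) (v : W) : Prop := ∃ w : W, s(v, w) ∈ M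

open scoped Classical in
/-- `rank G pref M v = pref v (M(v))`, with the convention `|N(v)|+1` if `v` is unmatched. -/
noncomputable def rank {W : Type u} (G : SimpleGraph W) (pref : W → W → ℕ)
    (M : Set (Sym2 W)) (v : W) : ℕ :=
  if h : ∃ w : W, s(v, w) ∈ M then pref v h.choose else (G.neighborSet v).ncard + 1

/-- The number of vertices preferring `M` over `M'`. -/
noncomputable def vote {W : Type u} (G : SimpleGraph W) (pref : W → W → ℕ)
    (M M' : Set (Sym2 W)) : ℕ :=
  {v : W | rank G pref M v < rank G pref M' v}.ncard

/-- A popular matching: no other matching is more popular. -/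
def IsPopular {W : Type u} (G : SimpleGraph W) (pref : W → W → ℕ) (M : Set (Sym2 W)) : Prop :=
  IsMatching G M ∧
    ∀ M' : Set (Sym2 W), IsMatching G M' → vote G pref M' M ≤ vote G pref M M'

/-- Each vertex has a strict preference list: `pref v` is a bijection from the
neighborhood of `v` onto `{1, …, |N(v)|}`. -/
def HasPref {W : Type u} (G : SimpleGraph W) (pref : W → W → ℕ) : Prop :=
  ∀ v : W, Set.BijOn (pref v) (G.neighborSet v) (Set.Icc 1 (G.neighborSet v).ncard)

/-- The edge `e ∉ M` is labeled `+2` by `label_M` (given rank function `rk`):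
both endpoints prefer each other over their status in `M`. -/
def EdgePlus {W : Type u} (pref : W → W → ℕ) (rk : W → ℕ) (e : Sym2 W) : Prop :=
  ∃ x y : W, e = s(x, y) ∧ pref x y < rk x ∧ pref y x < rk y

/-- The edge `e ∉ M` is labeled `-2` by `label_M` (given rank function `rk`):
both endpoints prefer their status in `M` over each other. -/
def EdgeMinus {W : Type u} (pref : W → W → ℕ) (rk : W → ℕ) (e : Sym2 W) : Prop :=
  ∃ x y : W, e = s(x, y) ∧ rk x < pref x y ∧ rk y < pref y x

/-- The graph `G_M`: the spanning subgraph of `G` consisting of the edges of `M`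
together with the edges not labeled `-2`. -/
def GMgraph {W : Type u} (G : SimpleGraph W) (pref : W → W → ℕ) (M : Set (Sym2 W)) :
    SimpleGraph W where
  Adj x y := G.Adj x y ∧ (s(x, y) ∈ M ∨ ¬ EdgeMinus pref (rank G pref M) s(x, y))
  symm := by
    constructor
    intro x y h
    refine ⟨h.1.symm, ?_⟩
    rw [Sym2.eq_swap]
    exact h.2
  loopless := ⟨fun x h => G.ne_of_adj h.1 rfl⟩

/-- Consecutive edges alternate between `M` and non-`M`. -/
def altRel {W : Type u} (M : Set (Sym2 W)) (e e' : Sym2 W) : Prop := e ∈ M ↔ e' ∉ M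

/-- An alternating path (with respect to `M`) in a graph `G'`. -/
def IsAltPath {W : Type u} (M : Set (Sym2 W)) {G' : SimpleGraph W} {x y : W}
    (p : G'.Walk x y) : Prop :=
  p.IsPath ∧ List.Chain' (altRel M) p.edges ∧
    (∀ e, p.edges.head? = some e → e ∉ M → ¬ Matched M x) ∧
    (∀ e, p.edges.getLast? = some e → e ∉ M → ¬ Matched M y)

/-- An alternating cycle (with respect to `M`) in a graph `G'`:
the edges alternate cyclically between `M` and non-`M`. -/
def IsAltCycle {W : Type u} (M : Set (Sym2 W)) {G' : SimpleGraph W} {x : W}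
    (p : G'.Walk x x) : Prop :=
  p.IsCycle ∧ List.Chain' (altRel M) (p.edges ++ p.edges.take 1)

/-- `l` contains at least one edge labeled `+2`. -/
def OnePlusEdge {W : Type u} (pref : W → W → ℕ) (rk : W → ℕ) (l : List (Sym2 W)) : Prop :=
  ∃ e ∈ l, EdgePlus pref rk e

/-- `l` contains at least two edges labeled `+2`. -/
def TwoPlusEdges {W : Type u} (pref : W → W → ℕ) (rk : W → ℕ) (l : List (Sym2 W)) : Prop :=
  ∃ e ∈ l, ∃ e' ∈ l, e ≠ e' ∧ EdgePlus pref rk e ∧ EdgePlus pref rk e'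

/-- A vertex cover. -/
def IsVC {V : Type u} (G : SimpleGraph V) (U : Set V) : Prop :=
  ∀ ⦃x y : V⦄, G.Adj x y → x ∈ U ∨ y ∈ U
/-- An instance of Partitioned Vertex Cover: `G` is a finite simple graph, `P` is a
collection of pairwise disjoint edges of `G`, `T` is a collection of pairwise disjoint
3-element vertex sets each inducing a triangle in `G`, and every vertex of `G` lies in
exactly one member of `P ∪ T`. -/
def IsPVC {V : Type u} (G : SimpleGraph V) (P : Set (Sym2 V)) (T : Set (Finset V)) : Prop :=
  Finite V ∧
  P ⊆ G.edgeSet ∧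
  (∀ e ∈ P, ∀ e' ∈ P, e ≠ e' → ∀ v : V, v ∈ e → v ∉ e') ∧
  (∀ t ∈ T, t.card = 3) ∧
  (∀ t ∈ T, ∀ x ∈ t, ∀ y ∈ t, x ≠ y → G.Adj x y) ∧
  (∀ t ∈ T, ∀ t' ∈ T, t ≠ t' → ∀ v : V, v ∈ t → v ∉ t') ∧
  (∀ v : V, (∃ e ∈ P, v ∈ e) ∨ (∃ t ∈ T, v ∈ t)) ∧
  (∀ v : V, ¬ ((∃ e ∈ P, v ∈ e) ∧ (∃ t ∈ T, v ∈ t)))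

/-- A solution of a Partitioned Vertex Cover instance: a vertex cover `U` with
`|U ∩ P| = 1` for every pair `P` and `|U ∩ T| = 2` for every triple `T`. -/
def IsPVCSolution {V : Type u} (G : SimpleGraph V) (P : Set (Sym2 V)) (T : Set (Finset V))
    (U : Set V) : Prop :=
  IsVC G U ∧
  (∀ e ∈ P, {x : V | x ∈ e ∧ x ∈ U}.ncard = 1) ∧
  (∀ t ∈ T, {x : V | x ∈ t ∧ x ∈ U}.ncard = 2)

/-- The vertices of the graph `H` built from a Partitioned Vertex Cover instance:
`a i`, `b i`, `c i`, `d i` for a vertex `i` of `G`; `u i j` is the vertex `u^e_i` for the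
edge `e = {i,j}` of `G`; `f i j` is the vertex `f_{ij}` for the pair `{i,j} ∈ P`. -/
inductive Gad (V : Type u) : Type u where
  | a : V → Gad V
  | b : V → Gad V
  | c : V → Gad V
  | d : V → Gad V
  | u : V → V → Gad V
  | f : V → V → Gad V
deriving DecidableEq

/-- Which formal gadget vertices are really vertices of `H`. -/
def Gad.valid {V : Type u} (G : SimpleGraph V) (P : Set (Sym2 V)) : Gad V → Prop
  | .u i j => G.Adj i j
  | .f i j => s(i, j) ∈ P
  | _ => True

/-- The edges of `H`, up to symmetry. -/
inductive HBase {V : Type u} (G : SimpleGraph V) (P : Set (Sym2 V)) (T : Set (Finset V)) :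
    Gad V → Gad V → Prop where
  | da (i : V) : HBase G P T (.d i) (.a i)
  | ab (i : V) : HBase G P T (.a i) (.b i)
  | ac (i : V) : HBase G P T (.a i) (.c i)
  | bc (i : V) : HBase G P T (.b i) (.c i)
  | uu {i j : V} (h : G.Adj i j) : HBase G P T (.u i j) (.u j i)
  | bu {i j : V} (h : G.Adj i j) : HBase G P T (.b i) (.u i j)
  | df {i j : V} (h : s(i, j) ∈ P) : HBase G P T (.d i) (.f i j)
  | fc {i j : V} (h : s(i, j) ∈ P) : HBase G P T (.f i j) (.c j)
  | cd {i j : V} (h : s(i, j) ∈ P) : HBase G P T (.c i) (.d j)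
  | dd {i j : V} {t : Finset V} (ht : t ∈ T) (hi : i ∈ t) (hj : j ∈ t) (hne : i ≠ j) :
      HBase G P T (.d i) (.d j)
  | cc {i j : V} {t : Finset V} (ht : t ∈ T) (hi : i ∈ t) (hj : j ∈ t) (hne : i ≠ j) :
      HBase G P T (.c i) (.c j)

/-- The graph `H` of the Popular Matching instance built from `(G, P, T)`. -/
def Hgraph {V : Type u} (G : SimpleGraph V) (P : Set (Sym2 V)) (T : Set (Finset V)) :
    SimpleGraph {g : Gad V // Gad.valid G P g} where
  Adj x y := x ≠ y ∧ (HBase G P T x.1 y.1 ∨ HBase G P T y.1 x.1)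
  symm := ⟨fun _ _ h => ⟨h.1.symm, h.2.symm⟩⟩
  loopless := ⟨fun _ h => h.1 rfl⟩

/-- The Popular Matching instance (graph together with preference lists) constructed
from a Partitioned Vertex Cover instance `(G, P, T)`.  The field `pref` gives the
preference lists; all its values on the neighborhoods in `H` are pinned down, except
the ranks that `b i` assigns to the vertices `u^e_i`, which form an arbitrary fixed
bijection onto `{2, …, deg_G(i) + 1}`. -/
structure Reduction (V : Type u) [LinearOrder V] : Type u where
  G : SimpleGraph V
  P : Set (Sym2 V)
  T : Set (Finset V)
  ispvc : IsPVC G P T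
  pref : Gad V → Gad V → ℕ
  pref_ab : ∀ i : V, pref (.a i) (.b i) = 1
  pref_ac : ∀ i : V, pref (.a i) (.c i) = 2
  pref_ad : ∀ i : V, pref (.a i) (.d i) = 3
  pref_ba : ∀ i : V, pref (.b i) (.a i) = 1
  pref_bu : ∀ i : V, Set.BijOn (pref (.b i)) {g : Gad V | ∃ j : V, G.Adj i j ∧ g = .u i j}
      (Set.Icc 2 ((G.neighborSet i).ncard + 1))
  pref_bc : ∀ i : V, pref (.b i) (.c i) = (G.neighborSet i).ncard + 2
  pref_ca : ∀ i : V, pref (.c i) (.a i) = 1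
  pref_cb : ∀ i : V, pref (.c i) (.b i) = 2
  pref_da : ∀ i : V, pref (.d i) (.a i) = 1
  pref_uu : ∀ i j : V, G.Adj i j → pref (.u i j) (.u j i) = 1
  pref_ub : ∀ i j : V, G.Adj i j → pref (.u i j) (.b i) = 2
  pref_cf : ∀ i j : V, s(i, j) ∈ P → pref (.c i) (.f j i) = 3
  pref_cd : ∀ i j : V, s(i, j) ∈ P → pref (.c i) (.d j) = 4
  pref_dc : ∀ i j : V, s(i, j) ∈ P → pref (.d i) (.c j) = 2
  pref_df : ∀ i j : V, s(i, j) ∈ P → pref (.d i) (.f i j) = 3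
  pref_fd : ∀ i j : V, s(i, j) ∈ P → pref (.f i j) (.d i) = 1
  pref_fc : ∀ i j : V, s(i, j) ∈ P → pref (.f i j) (.c j) = 2
  pref_tri : ∀ t ∈ T, ∀ i j k : V, t = {i, j, k} → i < j → j < k →
    pref (.c i) (.c k) = 3 ∧ pref (.c i) (.c j) = 4 ∧
    pref (.c j) (.c i) = 3 ∧ pref (.c j) (.c k) = 4 ∧
    pref (.c k) (.c j) = 3 ∧ pref (.c k) (.c i) = 4 ∧
    pref (.d i) (.d j) = 2 ∧ pref (.d i) (.d k) = 3 ∧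
    pref (.d j) (.d k) = 2 ∧ pref (.d j) (.d i) = 3 ∧
    pref (.d k) (.d i) = 2 ∧ pref (.d k) (.d j) = 3

namespace Reduction

variable {V : Type u} [LinearOrder V] (R : Reduction V)

/-- The vertex set of `H`. -/
abbrev HV : Type u := {g : Gad V // Gad.valid R.G R.P g}

/-- The graph `H`. -/
def H : SimpleGraph R.HV := Hgraph R.G R.P R.T

/-- The preference lists of `H`, as a function on its vertices. -/
def prefH : R.HV → R.HV → ℕ := fun x y => R.pref x.1 y.1

/-- The vertex `a_i` of `H`. -/
def va (i : V) : R.HV := ⟨.a i, trivial⟩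
/-- The vertex `b_i` of `H`. -/
def vb (i : V) : R.HV := ⟨.b i, trivial⟩
/-- The vertex `c_i` of `H`. -/
def vc (i : V) : R.HV := ⟨.c i, trivial⟩
/-- The vertex `d_i` of `H`. -/
def vd (i : V) : R.HV := ⟨.d i, trivial⟩
/-- The vertex `u^e_i` of `H`, for an edge `e = {i,j}` of `G`. -/
def vu (i j : V) (h : R.G.Adj i j) : R.HV := ⟨.u i j, h⟩
/-- The vertex `f_{ij}` of `H`, for a pair `{i,j} ∈ P`. -/
def vf (i j : V) (h : s(i, j) ∈ R.P) : R.HV := ⟨.f i j, h⟩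

/-- The matching `M*` in `H` constructed from a solution `U`. -/
def Mstar (U : Set V) : Set (Sym2 R.HV) :=
  {e : Sym2 R.HV |
    (∃ (i j : V) (h : R.G.Adj i j), e = s(R.vu i j h, R.vu j i h.symm)) ∨
    (∃ (x y : V) (h : s(x, y) ∈ R.P) (h' : s(y, x) ∈ R.P), x ∉ U ∧ y ∈ U ∧
      (e = s(R.va x, R.vd x) ∨ e = s(R.vb x, R.vc x) ∨ e = s(R.va y, R.vb y) ∨
       e = s(R.vf x y h, R.vc y) ∨ e = s(R.vf y x h', R.vd y))) ∨
    (∃ t ∈ R.T, ∃ x y z : V, t = {x, y, z} ∧ x ∉ U ∧ y ∈ U ∧ z ∈ U ∧ y ≠ z ∧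
      R.pref (.d x) (.d y) < R.pref (.d x) (.d z) ∧
      (e = s(R.va x, R.vd x) ∨ e = s(R.vb x, R.vc x) ∨ e = s(R.va y, R.vb y) ∨
       e = s(R.va z, R.vb z) ∨ e = s(R.vc y, R.vc z) ∨ e = s(R.vd y, R.vd z)))}

end Reduction

/-- The vertex set of the Pair Selector gadget associated with a pair `{i,j}`. -/
def pairGadget {V : Type u} (i j : V) : Set (Gad V) :=
  {g : Gad V | ∃ x : V, (x = i ∨ x = j) ∧ (g = .a x ∨ g = .b x ∨ g = .c x ∨ g = .d x)} ∪
    {Gad.f i j, Gad.f j i}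

/-- The vertex set of the Triple Selector gadget associated with a triple `t`. -/
def tripleGadget {V : Type u} (t : Finset V) : Set (Gad V) :=
  {g : Gad V | ∃ x ∈ t, g = .a x ∨ g = .b x ∨ g = .c x ∨ g = .d x}

section Framework
set_option linter.unusedSectionVars false
set_option linter.unusedVariables false

variable {W : Type u} {G : SimpleGraph W} {M M' : Set (Sym2 W)} {pref : W → W → ℕ}

lemma mem_swap {x y : W} (h : s(x, y) ∈ M) : s(y, x) ∈ M := by rwa [Sym2.eq_swap] at h

lemma partner_unique (hM : IsMatching G M) {v w w' : W} (h1 : s(v, w) ∈ M)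
    (h2 : s(v, w') ∈ M) : w = w' := by
  by_contra hne
  have hedge : s(v, w) ≠ s(v, w') := by
    intro h
    rcases Sym2.eq_iff.mp h with ⟨-, rfl⟩ | ⟨rfl, rfl⟩ <;> exact hne rfl
  exact hM.2 _ h1 _ h2 hedge v (Sym2.mem_mk_left _ _) (Sym2.mem_mk_left _ _)

lemma rank_eq_of_mem (hM : IsMatching G M) {v w : W} (hvw : s(v, w) ∈ M) :
    rank G pref M v = pref v w := by
  have h : ∃ x, s(v, x) ∈ M := ⟨w, hvw⟩
  rw [rank, dif_pos h]
  exact congrArg (pref v) (partner_unique hM h.choose_spec hvw)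

lemma rank_of_unmatched {v : W} (h : ¬ Matched M v) :
    rank G pref M v = (G.neighborSet v).ncard + 1 := by
  rw [rank]; exact dif_neg h

lemma rank_congr (hM : IsMatching G M) (hM' : IsMatching G M') {v : W}
    (h : ∀ w, s(v, w) ∈ M ↔ s(v, w) ∈ M') : rank G pref M v = rank G pref M' v := by
  by_cases hm : ∃ w, s(v, w) ∈ M
  · obtain ⟨w, hw⟩ := hm
    rw [rank_eq_of_mem hM hw, rank_eq_of_mem hM' ((h w).1 hw)]
  · have hm' : ¬ Matched M' v := fun ⟨w, hw⟩ => hm ⟨w, (h w).2 hw⟩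
    rw [rank_of_unmatched hm, rank_of_unmatched hm']

variable [Finite W]

lemma two_le_rank_of_unmatched {v w : W} (h : ¬ Matched M v) (hw : G.Adj v w) :
    2 ≤ rank G pref M v := by
  rw [rank_of_unmatched h]
  have : 0 < (G.neighborSet v).ncard := (Set.ncard_pos (Set.toFinite _)).mpr ⟨w, hw⟩
  omega

/-- The updated matching: remove all edges meeting `X`, add the edges of `A`. -/
def MUpd (M : Set (Sym2 W)) (X : Set W) (A : Set (Sym2 W)) : Set (Sym2 W) :=
  (M \ {e | ∃ v ∈ X, v ∈ e}) ∪ A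

lemma mUpd_isMatching {X : Set W} {A : Set (Sym2 W)} (hM : IsMatching G M)
    (hAe : A ⊆ G.edgeSet) (hAX : ∀ e ∈ A, ∀ v, v ∈ e → v ∈ X)
    (hAd : ∀ e ∈ A, ∀ e' ∈ A, e ≠ e' → ∀ v, v ∈ e → v ∉ e') :
    IsMatching G (MUpd M X A) := by
  constructor
  · rintro e (⟨he, -⟩ | he)
    · exact hM.1 he
    · exact hAe he
  · rintro e (⟨he, heX⟩ | heA) e' (⟨he', heX'⟩ | heA') hne v hv hv'
    · exact hM.2 _ he _ he' hne v hv hv'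
    · exact heX ⟨v, hAX _ heA' v hv', hv⟩
    · exact heX' ⟨v, hAX _ heA v hv, hv'⟩
    · exact hAd _ heA _ heA' hne v hv hv'

lemma rank_mUpd_eq {X : Set W} {A : Set (Sym2 W)} (hM : IsMatching G M)
    (hM' : IsMatching G (MUpd M X A)) (hAX : ∀ e ∈ A, ∀ v, v ∈ e → v ∈ X) {v : W}
    (hvX : v ∉ X) (hvM : ∀ w ∈ X, s(v, w) ∉ M) :
    rank G pref M v = rank G pref (MUpd M X A) v := by
  refine rank_congr hM hM' fun w => ⟨fun h => ?_, fun h => ?_⟩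
  · refine Or.inl ⟨h, ?_⟩
    rintro ⟨x, hx, hxe⟩
    rcases Sym2.mem_iff.1 hxe with rfl | rfl
    · exact hvX hx
    · exact hvM _ hx h
  · rcases h with ⟨h, -⟩ | h
    · exact h
    · exact absurd (hAX _ h v (Sym2.mem_mk_left _ _)) hvX

lemma mUpd_loser {X : Set W} {A : Set (Sym2 W)} (hM : IsMatching G M)
    (hM' : IsMatching G (MUpd M X A)) (hAX : ∀ e ∈ A, ∀ v, v ∈ e → v ∈ X) {v : W}
    (h : rank G pref M v < rank G pref (MUpd M X A) v) :
    v ∈ X ∨ ∃ w ∈ X, s(v, w) ∈ M := by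
  by_contra hc
  push_neg at hc
  exact absurd (rank_mUpd_eq hM hM' hAX hc.1 hc.2) h.ne

lemma not_popular_votes (hM : IsMatching G M) (hM' : IsMatching G M') (Win : Finset W)
    (hwin : ∀ v ∈ Win, rank G pref M' v < rank G pref M v) (L : Set W)
    (hL : ∀ v : W, rank G pref M v < rank G pref M' v → v ∈ L)
    (hcard : L.ncard < Win.card) (hpop : IsPopular G pref M) : False := by
  have h2 : Win.card ≤ vote G pref M' M := by
    rw [← Set.ncard_coe_finset]
    exact Set.ncard_le_ncard (fun v hv => hwin v hv) (Set.toFinite _)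
  have h3 : vote G pref M M' ≤ L.ncard := Set.ncard_le_ncard hL (Set.toFinite _)
  have := hpop.2 M' hM'
  omega

end Framework
section Gadget
set_option linter.unusedSectionVars false
set_option linter.unusedVariables false

instance gadFinite {V : Type u} [Finite V] : Finite (Gad V) := by
  have hinj : Function.Injective (fun g : Gad V => match g with
      | .a i => ((0 : Fin 6), i, i) | .b i => (1, i, i) | .c i => (2, i, i)
      | .d i => (3, i, i) | .u i j => (4, i, j) | .f i j => (5, i, j)) := by
    intro x y h
    cases x <;> cases y <;> simp_all
  exact Finite.of_injective _ hinj

namespace Reduction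

variable {V : Type u} [LinearOrder V] (R : Reduction V) {M : Set (Sym2 R.HV)}

lemma H_adj_iff {x y : R.HV} : R.H.Adj x y ↔
    x ≠ y ∧ (HBase R.G R.P R.T x.1 y.1 ∨ HBase R.G R.P R.T y.1 x.1) := Iff.rfl

lemma adj_ab (i : V) : R.H.Adj (R.va i) (R.vb i) :=
  R.H_adj_iff.mpr ⟨by simp [va, vb, Subtype.ext_iff], Or.inl (HBase.ab i)⟩

lemma adj_ac (i : V) : R.H.Adj (R.va i) (R.vc i) :=
  R.H_adj_iff.mpr ⟨by simp [va, vc, Subtype.ext_iff], Or.inl (HBase.ac i)⟩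

lemma adj_bu {i k : V} (h : R.G.Adj i k) : R.H.Adj (R.vb i) (R.vu i k h) :=
  R.H_adj_iff.mpr ⟨by simp [vb, vu, Subtype.ext_iff], Or.inl (HBase.bu h)⟩

lemma adj_uu {i k : V} (h : R.G.Adj i k) : R.H.Adj (R.vu i k h) (R.vu k i h.symm) :=
  R.H_adj_iff.mpr ⟨by simp [vu, h.ne, Subtype.ext_iff], Or.inl (HBase.uu h)⟩

lemma adj_a_inv {i : V} {x : R.HV} (h : R.H.Adj (R.va i) x) :
    x = R.vb i ∨ x = R.vc i ∨ x = R.vd i := by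
  obtain ⟨g, hg⟩ := x
  obtain ⟨hne, hb | hb⟩ := R.H_adj_iff.mp h
  · cases hb with
    | ab => exact Or.inl (Subtype.ext rfl)
    | ac => exact Or.inr (Or.inl (Subtype.ext rfl))
  · cases hb with
    | da => exact Or.inr (Or.inr (Subtype.ext rfl))

lemma adj_b_inv {i : V} {x : R.HV} (h : R.H.Adj (R.vb i) x) :
    x = R.va i ∨ x = R.vc i ∨ ∃ (k : V) (hk : R.G.Adj i k), x = R.vu i k hk := by
  obtain ⟨g, hg⟩ := x
  obtain ⟨hne, hb | hb⟩ := R.H_adj_iff.mp h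
  · cases hb with
    | bc => exact Or.inr (Or.inl (Subtype.ext rfl))
    | bu hk => exact Or.inr (Or.inr ⟨_, hk, Subtype.ext rfl⟩)
  · cases hb with
    | ab => exact Or.inl (Subtype.ext rfl)

lemma adj_u_inv {i k : V} {hik : R.G.Adj i k} {x : R.HV} (h : R.H.Adj (R.vu i k hik) x) :
    x = R.vu k i hik.symm ∨ x = R.vb i := by
  obtain ⟨g, hg⟩ := x
  obtain ⟨hne, hb | hb⟩ := R.H_adj_iff.mp h
  · cases hb with
    | uu h' => exact Or.inl (Subtype.ext rfl)
  · cases hb with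
    | uu h' => exact Or.inl (Subtype.ext rfl)
    | bu h' => exact Or.inr (Subtype.ext rfl)

lemma prefH_ab (i : V) : R.prefH (R.va i) (R.vb i) = 1 := R.pref_ab i
lemma prefH_ac (i : V) : R.prefH (R.va i) (R.vc i) = 2 := R.pref_ac i
lemma prefH_ad (i : V) : R.prefH (R.va i) (R.vd i) = 3 := R.pref_ad i
lemma prefH_ba (i : V) : R.prefH (R.vb i) (R.va i) = 1 := R.pref_ba i
lemma prefH_bc (i : V) : R.prefH (R.vb i) (R.vc i) = (R.G.neighborSet i).ncard + 2 :=
  R.pref_bc i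
lemma prefH_ca (i : V) : R.prefH (R.vc i) (R.va i) = 1 := R.pref_ca i
lemma prefH_cb (i : V) : R.prefH (R.vc i) (R.vb i) = 2 := R.pref_cb i
lemma prefH_uu {i k : V} (h : R.G.Adj i k) : R.prefH (R.vu i k h) (R.vu k i h.symm) = 1 :=
  R.pref_uu i k h
lemma prefH_ub {i k : V} (h : R.G.Adj i k) : R.prefH (R.vu i k h) (R.vb i) = 2 :=
  R.pref_ub i k h
lemma prefH_bu_mem {i k : V} (hk : R.G.Adj i k) :
    R.prefH (R.vb i) (R.vu i k hk) ∈ Set.Icc 2 ((R.G.neighborSet i).ncard + 1) :=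
  (R.pref_bu i).mapsTo ⟨k, hk, rfl⟩

lemma adj_of_mem (hM : IsMatching R.H M) {x y : R.HV} (h : s(x, y) ∈ M) :
    R.H.Adj x y := R.H.mem_edgeSet.mp (hM.1 h)

lemma one_lt_rank_a (hM : IsMatching R.H M) {i : V} (hab : s(R.va i, R.vb i) ∉ M) :
    1 < rank R.H R.prefH M (R.va i) := by
  haveI : Finite V := R.ispvc.1
  by_cases h : Matched M (R.va i)
  · obtain ⟨z, hz⟩ := h
    rcases R.adj_a_inv (R.adj_of_mem hM hz) with rfl | rfl | rfl
    · exact absurd hz hab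
    · rw [rank_eq_of_mem hM hz, prefH_ac]; omega
    · rw [rank_eq_of_mem hM hz, prefH_ad]; omega
  · have := two_le_rank_of_unmatched (pref := R.prefH) h (R.adj_ab i)
    omega

end Reduction
end Gadget
section Aux
set_option linter.unusedSectionVars false
set_option linter.unusedVariables false
namespace Reduction

variable {V : Type u} [LinearOrder V] (R : Reduction V) {M : Set (Sym2 R.HV)}

lemma aux_b_unmatched (hpop : IsPopular R.H R.prefH M) (i : V)
    (hab : s(R.va i, R.vb i) ∉ M) (hb : ¬ Matched M (R.vb i)) : False := by
  haveI : Finite V := R.ispvc.1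
  have hM := hpop.1
  set X : Set R.HV := {R.va i, R.vb i} with hX
  set A : Set (Sym2 R.HV) := {s(R.va i, R.vb i)} with hA
  have hAe : A ⊆ R.H.edgeSet := by
    intro e he; rw [hA, Set.mem_singleton_iff] at he; subst he
    exact R.H.mem_edgeSet.mpr (R.adj_ab i)
  have hAX : ∀ e ∈ A, ∀ v, v ∈ e → v ∈ X := by
    intro e he v hv; rw [hA, Set.mem_singleton_iff] at he; subst he
    rcases Sym2.mem_iff.1 hv with rfl | rfl
    · exact Or.inl rfl
    · exact Or.inr rfl
  have hAd : ∀ e ∈ A, ∀ e' ∈ A, e ≠ e' → ∀ v, v ∈ e → v ∉ e' := by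
    intro e he e' he' hne
    rw [hA, Set.mem_singleton_iff] at he he'; subst he; subst he'
    exact absurd rfl hne
  have hM' : IsMatching R.H (MUpd M X A) := mUpd_isMatching hM hAe hAX hAd
  have hw_ab : s(R.va i, R.vb i) ∈ MUpd M X A := Or.inr rfl
  have hwa : rank R.H R.prefH (MUpd M X A) (R.va i) = 1 := by
    rw [rank_eq_of_mem hM' hw_ab]; exact R.prefH_ab i
  have hwb : rank R.H R.prefH (MUpd M X A) (R.vb i) = 1 := by
    rw [rank_eq_of_mem hM' (mem_swap hw_ab)]; exact R.prefH_ba i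
  have hra : 1 < rank R.H R.prefH M (R.va i) := R.one_lt_rank_a hM hab
  have hrb : 1 < rank R.H R.prefH M (R.vb i) := by
    have := two_le_rank_of_unmatched (pref := R.prefH) hb (R.adj_ab i).symm
    omega
  refine not_popular_votes hM hM' {R.va i, R.vb i} ?_ {v | s(R.va i, v) ∈ M} ?_ ?_ hpop
  · intro v hv
    simp only [Finset.mem_insert, Finset.mem_singleton] at hv
    rcases hv with rfl | rfl
    · rw [hwa]; exact hra
    · rw [hwb]; exact hrb
  · intro v hv
    rcases mUpd_loser hM hM' hAX hv with hvX | ⟨w, hwX, hvw⟩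
    · simp only [hX, Set.mem_insert_iff, Set.mem_singleton_iff] at hvX
      rcases hvX with rfl | rfl
      · rw [hwa] at hv; omega
      · rw [hwb] at hv; omega
    · simp only [hX, Set.mem_insert_iff, Set.mem_singleton_iff] at hwX
      rcases hwX with rfl | rfl
      · exact mem_swap hvw
      · exact absurd ⟨v, mem_swap hvw⟩ hb
  · have h1 : {v : R.HV | s(R.va i, v) ∈ M}.ncard ≤ 1 :=
      (Set.ncard_le_one_iff (Set.toFinite _)).mpr fun ha hb => partner_unique hM ha hb
    have h2 : ({R.va i, R.vb i} : Finset R.HV).card = 2 := by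
      rw [Finset.card_insert_of_notMem (by simp [va, vb, Subtype.ext_iff]), Finset.card_singleton]
    omega

end Reduction
end Aux
section Aux2
set_option linter.unusedSectionVars false
set_option linter.unusedVariables false
namespace Reduction

variable {V : Type u} [LinearOrder V] (R : Reduction V) {M : Set (Sym2 R.HV)}

lemma aux_bc_a_unmatched (hpop : IsPopular R.H R.prefH M) (i : V)
    (hab : s(R.va i, R.vb i) ∉ M) (hbc : s(R.vb i, R.vc i) ∈ M)
    (ha : ¬ Matched M (R.va i)) : False := by
  haveI : Finite V := R.ispvc.1
  have hM := hpop.1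
  set X : Set R.HV := {R.va i, R.vb i, R.vc i} with hX
  set A : Set (Sym2 R.HV) := {s(R.va i, R.vb i)} with hA
  have hAe : A ⊆ R.H.edgeSet := by
    intro e he; rw [hA, Set.mem_singleton_iff] at he; subst he
    exact R.H.mem_edgeSet.mpr (R.adj_ab i)
  have hAX : ∀ e ∈ A, ∀ v, v ∈ e → v ∈ X := by
    intro e he v hv; rw [hA, Set.mem_singleton_iff] at he; subst he
    rcases Sym2.mem_iff.1 hv with rfl | rfl
    · exact Or.inl rfl
    · exact Or.inr (Or.inl rfl)
  have hAd : ∀ e ∈ A, ∀ e' ∈ A, e ≠ e' → ∀ v, v ∈ e → v ∉ e' := by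
    intro e he e' he' hne
    rw [hA, Set.mem_singleton_iff] at he he'; subst he; subst he'
    exact absurd rfl hne
  have hM' : IsMatching R.H (MUpd M X A) := mUpd_isMatching hM hAe hAX hAd
  have hw_ab : s(R.va i, R.vb i) ∈ MUpd M X A := Or.inr rfl
  have hwa : rank R.H R.prefH (MUpd M X A) (R.va i) = 1 := by
    rw [rank_eq_of_mem hM' hw_ab]; exact R.prefH_ab i
  have hwb : rank R.H R.prefH (MUpd M X A) (R.vb i) = 1 := by
    rw [rank_eq_of_mem hM' (mem_swap hw_ab)]; exact R.prefH_ba i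
  have hra : 1 < rank R.H R.prefH M (R.va i) := R.one_lt_rank_a hM hab
  have hrb : rank R.H R.prefH M (R.vb i) = (R.G.neighborSet i).ncard + 2 := by
    rw [rank_eq_of_mem hM hbc]; exact R.prefH_bc i
  refine not_popular_votes hM hM' {R.va i, R.vb i} ?_ {R.vc i} ?_ ?_ hpop
  · intro v hv
    simp only [Finset.mem_insert, Finset.mem_singleton] at hv
    rcases hv with rfl | rfl
    · rw [hwa]; exact hra
    · rw [hwb, hrb]; omega
  · intro v hv
    rcases mUpd_loser hM hM' hAX hv with hvX | ⟨w, hwX, hvw⟩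
    · simp only [hX, Set.mem_insert_iff, Set.mem_singleton_iff] at hvX
      rcases hvX with rfl | rfl | rfl
      · rw [hwa] at hv; omega
      · rw [hwb] at hv; omega
      · exact rfl
    · simp only [hX, Set.mem_insert_iff, Set.mem_singleton_iff] at hwX
      rcases hwX with rfl | rfl | rfl
      · exact absurd ⟨v, mem_swap hvw⟩ ha
      · have := partner_unique hM (mem_swap hvw) hbc
        subst this; exact rfl
      · have := partner_unique hM (mem_swap hvw) (mem_swap hbc)
        subst this; rw [hrb] at hv; omega
  · have h2 : ({R.va i, R.vb i} : Finset R.HV).card = 2 := by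
      rw [Finset.card_insert_of_notMem (by simp [va, vb, Subtype.ext_iff]), Finset.card_singleton]
    have h1 : ({R.vc i} : Set R.HV).ncard = 1 := Set.ncard_singleton _
    omega

lemma aux_bu (hpop : IsPopular R.H R.prefH M) (i k : V) (hk : R.G.Adj i k)
    (hab : s(R.va i, R.vb i) ∉ M) (hbu : s(R.vb i, R.vu i k hk) ∈ M) : False := by
  haveI : Finite V := R.ispvc.1
  have hM := hpop.1
  have hik : i ≠ k := hk.ne
  set w : R.HV := R.vu i k hk with hw
  set w' : R.HV := R.vu k i hk.symm with hw'
  set X : Set R.HV := {R.va i, R.vb i, w, w'} with hX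
  set A : Set (Sym2 R.HV) := {s(R.va i, R.vb i), s(w, w')} with hA
  have hAe : A ⊆ R.H.edgeSet := by
    intro e he
    simp only [hA, Set.mem_insert_iff, Set.mem_singleton_iff] at he
    rcases he with rfl | rfl
    · exact R.H.mem_edgeSet.mpr (R.adj_ab i)
    · exact R.H.mem_edgeSet.mpr (R.adj_uu hk)
  have hAX : ∀ e ∈ A, ∀ v, v ∈ e → v ∈ X := by
    intro e he v hv
    simp only [hA, Set.mem_insert_iff, Set.mem_singleton_iff] at he
    rcases he with rfl | rfl <;> rcases Sym2.mem_iff.1 hv with rfl | rfl <;> simp [hX]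
  have hAd : ∀ e ∈ A, ∀ e' ∈ A, e ≠ e' → ∀ v, v ∈ e → v ∉ e' := by
    intro e he e' he' hne
    simp only [hA, Set.mem_insert_iff, Set.mem_singleton_iff] at he he'
    rcases he with rfl | rfl <;> rcases he' with rfl | rfl <;>
      first
      | exact absurd rfl hne
      | (intro v hv hv'
         rcases Sym2.mem_iff.1 hv with rfl | rfl <;>
           rcases Sym2.mem_iff.1 hv' with h | h <;>
           simp [hw, hw', va, vb, vu, hik, Subtype.ext_iff] at h)
  have hM' : IsMatching R.H (MUpd M X A) := mUpd_isMatching hM hAe hAX hAd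
  have hw_ab : s(R.va i, R.vb i) ∈ MUpd M X A := Or.inr (Or.inl rfl)
  have hw_uu : s(w, w') ∈ MUpd M X A := Or.inr (Or.inr rfl)
  have hwa : rank R.H R.prefH (MUpd M X A) (R.va i) = 1 := by
    rw [rank_eq_of_mem hM' hw_ab]; exact R.prefH_ab i
  have hwb : rank R.H R.prefH (MUpd M X A) (R.vb i) = 1 := by
    rw [rank_eq_of_mem hM' (mem_swap hw_ab)]; exact R.prefH_ba i
  have hwu : rank R.H R.prefH (MUpd M X A) w = 1 := by
    rw [rank_eq_of_mem hM' hw_uu]; exact R.prefH_uu hk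
  have hwu' : rank R.H R.prefH (MUpd M X A) w' = 1 := by
    rw [rank_eq_of_mem hM' (mem_swap hw_uu)]; exact R.prefH_uu hk.symm
  have hra : 1 < rank R.H R.prefH M (R.va i) := R.one_lt_rank_a hM hab
  have hbmem := R.prefH_bu_mem hk
  have hrb : rank R.H R.prefH M (R.vb i) = R.prefH (R.vb i) w := rank_eq_of_mem hM hbu
  have hrb2 : 2 ≤ rank R.H R.prefH M (R.vb i) := by rw [hrb]; exact hbmem.1
  have hru : rank R.H R.prefH M w = 2 := by
    rw [rank_eq_of_mem hM (mem_swap hbu)]; exact R.prefH_ub hk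
  have hru' : 1 < rank R.H R.prefH M w' := by
    by_cases h : Matched M w'
    · obtain ⟨z, hz⟩ := h
      rcases R.adj_u_inv (R.adj_of_mem hM hz) with rfl | rfl
      · have := partner_unique hM (mem_swap hz) (mem_swap hbu)
        simp [hw', vu, vb, Subtype.ext_iff] at this
      · rw [rank_eq_of_mem hM hz, R.prefH_ub hk.symm]; omega
    · have := two_le_rank_of_unmatched (pref := R.prefH) h (R.adj_uu hk.symm)
      omega
  refine not_popular_votes hM hM' {R.va i, R.vb i, w, w'} ?_
    ({v | s(R.va i, v) ∈ M} ∪ {v | s(w', v) ∈ M}) ?_ ?_ hpop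
  · intro v hv
    simp only [Finset.mem_insert, Finset.mem_singleton] at hv
    rcases hv with rfl | rfl | rfl | rfl
    · rw [hwa]; exact hra
    · rw [hwb]; omega
    · rw [hwu, hru]; omega
    · rw [hwu']; exact hru'
  · intro v hv
    rcases mUpd_loser hM hM' hAX hv with hvX | ⟨w0, hwX, hvw⟩
    · simp only [hX, Set.mem_insert_iff, Set.mem_singleton_iff] at hvX
      rcases hvX with rfl | rfl | rfl | rfl
      · rw [hwa] at hv; omega
      · rw [hwb] at hv; omega
      · rw [hwu] at hv; omega
      · rw [hwu'] at hv; omega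
    · simp only [hX, Set.mem_insert_iff, Set.mem_singleton_iff] at hwX
      rcases hwX with rfl | rfl | rfl | rfl
      · exact Or.inl (mem_swap hvw)
      · have := partner_unique hM (mem_swap hvw) hbu
        subst this; rw [hwu] at hv; omega
      · have := partner_unique hM (mem_swap hvw) (mem_swap hbu)
        subst this; rw [hwb] at hv; omega
      · exact Or.inr (mem_swap hvw)
  · have h2 : ({R.va i, R.vb i, w, w'} : Finset R.HV).card = 4 := by
      rw [Finset.card_insert_of_notMem (by simp [hw, hw', va, vb, vu, Subtype.ext_iff]),
        Finset.card_insert_of_notMem (by simp [hw, hw', vb, vu, Subtype.ext_iff]),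
        Finset.card_insert_of_notMem (by simp [hw, hw', vu, hik, Subtype.ext_iff]),
        Finset.card_singleton]
    have hu1 : {v : R.HV | s(R.va i, v) ∈ M}.ncard ≤ 1 :=
      (Set.ncard_le_one_iff (Set.toFinite _)).mpr fun ha hb => partner_unique hM ha hb
    have hu2 : {v : R.HV | s(w', v) ∈ M}.ncard ≤ 1 :=
      (Set.ncard_le_one_iff (Set.toFinite _)).mpr fun ha hb => partner_unique hM ha hb
    have := Set.ncard_union_le {v : R.HV | s(R.va i, v) ∈ M} {v : R.HV | s(w', v) ∈ M}
    omega

end Reduction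
end Aux2
section Aux3
set_option linter.unusedSectionVars false
set_option linter.unusedVariables false
namespace Reduction

variable {V : Type u} [LinearOrder V] (R : Reduction V) {M : Set (Sym2 R.HV)}

lemma matched_structure (hpop : IsPopular R.H R.prefH M) (i : V)
    (hab : s(R.va i, R.vb i) ∉ M) :
    s(R.va i, R.vd i) ∈ M ∧ s(R.vb i, R.vc i) ∈ M := by
  haveI : Finite V := R.ispvc.1
  have hM := hpop.1
  by_cases hb : Matched M (R.vb i)
  · obtain ⟨z, hz⟩ := hb
    rcases R.adj_b_inv (R.adj_of_mem hM hz) with rfl | rfl | ⟨k, hk, rfl⟩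
    · exact absurd (mem_swap hz) hab
    · refine ⟨?_, hz⟩
      by_cases ha : Matched M (R.va i)
      · obtain ⟨z', hz'⟩ := ha
        rcases R.adj_a_inv (R.adj_of_mem hM hz') with rfl | rfl | rfl
        · exact absurd hz' hab
        · have := partner_unique hM (mem_swap hz') (mem_swap hz)
          simp [va, vb, Subtype.ext_iff] at this
        · exact hz'
      · exact (R.aux_bc_a_unmatched hpop i hab hz ha).elim
    · exact (R.aux_bu hpop i k hk hab hz).elim
  · exact (R.aux_b_unmatched hpop i hab hb).elim

end Reduction
end Aux3
/-- If `M` is a popular matching in `H`, then `U = {i : {a_i, b_i} ∈ M}` is a vertex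
cover of `G`. -/
theorem popular_gives_vertex_cover {V : Type u} [LinearOrder V] (R : Reduction V)
    (M : Set (Sym2 R.HV)) (hM : IsPopular R.H R.prefH M) :
    IsVC R.G {i : V | s(R.va i, R.vb i) ∈ M} := by
  intro i j hadj
  by_contra hcon
  push_neg at hcon
  simp only [Set.mem_setOf_eq] at hcon
  obtain ⟨hi, hj⟩ := hcon
  haveI : Finite V := R.ispvc.1
  have hMm := hM.1
  have hij : i ≠ j := hadj.ne
  have hji : j ≠ i := hadj.ne'
  obtain ⟨hdi, hbci⟩ := R.matched_structure hM i hi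
  obtain ⟨hdj, hbcj⟩ := R.matched_structure hM j hj
  set u1 : R.HV := R.vu i j hadj with hu1
  set u2 : R.HV := R.vu j i hadj.symm with hu2
  by_cases huu : s(u1, u2) ∈ M
  · -- hard case: replace the five edges by four better ones
    set X : Set R.HV := {R.va i, R.vb i, R.vc i, R.vd i, R.va j, R.vb j, R.vc j, R.vd j,
      u1, u2} with hX
    set A : Set (Sym2 R.HV) := {s(R.va i, R.vc i), s(R.vb i, u1), s(R.vb j, u2),
      s(R.va j, R.vc j)} with hA
    have hAe : A ⊆ R.H.edgeSet := by
      intro e he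
      simp only [hA, Set.mem_insert_iff, Set.mem_singleton_iff] at he
      rcases he with rfl | rfl | rfl | rfl
      · exact R.H.mem_edgeSet.mpr (R.adj_ac i)
      · exact R.H.mem_edgeSet.mpr (R.adj_bu hadj)
      · exact R.H.mem_edgeSet.mpr (R.adj_bu hadj.symm)
      · exact R.H.mem_edgeSet.mpr (R.adj_ac j)
    have hAX : ∀ e ∈ A, ∀ v, v ∈ e → v ∈ X := by
      intro e he v hv
      simp only [hA, Set.mem_insert_iff, Set.mem_singleton_iff] at he
      rcases he with rfl | rfl | rfl | rfl <;> rcases Sym2.mem_iff.1 hv with rfl | rfl <;>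
        simp [hX]
    have hAd : ∀ e ∈ A, ∀ e' ∈ A, e ≠ e' → ∀ v, v ∈ e → v ∉ e' := by
      intro e he e' he' hne
      simp only [hA, Set.mem_insert_iff, Set.mem_singleton_iff] at he he'
      rcases he with rfl | rfl | rfl | rfl <;> rcases he' with rfl | rfl | rfl | rfl <;>
        first
        | exact absurd rfl hne
        | (intro v hv hv'
           rcases Sym2.mem_iff.1 hv with rfl | rfl <;>
             rcases Sym2.mem_iff.1 hv' with h | h <;>
             simp [hu1, hu2, Reduction.va, Reduction.vb, Reduction.vc, Reduction.vu, hij, hji, Subtype.ext_iff] at h)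
    have hM' : IsMatching R.H (MUpd M X A) := mUpd_isMatching hMm hAe hAX hAd
    have he1 : s(R.va i, R.vc i) ∈ MUpd M X A := Or.inr (Or.inl rfl)
    have he2 : s(R.vb i, u1) ∈ MUpd M X A := Or.inr (Or.inr (Or.inl rfl))
    have he3 : s(R.vb j, u2) ∈ MUpd M X A := Or.inr (Or.inr (Or.inr (Or.inl rfl)))
    have he4 : s(R.va j, R.vc j) ∈ MUpd M X A := Or.inr (Or.inr (Or.inr (Or.inr rfl)))
    have hbmemi := R.prefH_bu_mem hadj
    have hbmemj := R.prefH_bu_mem hadj.symm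
    have hbi2 : R.prefH (R.vb i) u1 ≤ (R.G.neighborSet i).ncard + 1 := hbmemi.2
    have hbj2 : R.prefH (R.vb j) u2 ≤ (R.G.neighborSet j).ncard + 1 := hbmemj.2
    have hwai : rank R.H R.prefH (MUpd M X A) (R.va i) = 2 := by
      rw [rank_eq_of_mem hM' he1]; exact R.prefH_ac i
    have hwci : rank R.H R.prefH (MUpd M X A) (R.vc i) = 1 := by
      rw [rank_eq_of_mem hM' (mem_swap he1)]; exact R.prefH_ca i
    have hwbi : rank R.H R.prefH (MUpd M X A) (R.vb i) = R.prefH (R.vb i) u1 :=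
      rank_eq_of_mem hM' he2
    have hwaj : rank R.H R.prefH (MUpd M X A) (R.va j) = 2 := by
      rw [rank_eq_of_mem hM' he4]; exact R.prefH_ac j
    have hwcj : rank R.H R.prefH (MUpd M X A) (R.vc j) = 1 := by
      rw [rank_eq_of_mem hM' (mem_swap he4)]; exact R.prefH_ca j
    have hwbj : rank R.H R.prefH (MUpd M X A) (R.vb j) = R.prefH (R.vb j) u2 :=
      rank_eq_of_mem hM' he3
    have hrai : rank R.H R.prefH M (R.va i) = 3 := by
      rw [rank_eq_of_mem hMm hdi]; exact R.prefH_ad i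
    have hrci : rank R.H R.prefH M (R.vc i) = 2 := by
      rw [rank_eq_of_mem hMm (mem_swap hbci)]; exact R.prefH_cb i
    have hrbi : rank R.H R.prefH M (R.vb i) = (R.G.neighborSet i).ncard + 2 := by
      rw [rank_eq_of_mem hMm hbci]; exact R.prefH_bc i
    have hraj : rank R.H R.prefH M (R.va j) = 3 := by
      rw [rank_eq_of_mem hMm hdj]; exact R.prefH_ad j
    have hrcj : rank R.H R.prefH M (R.vc j) = 2 := by
      rw [rank_eq_of_mem hMm (mem_swap hbcj)]; exact R.prefH_cb j
    have hrbj : rank R.H R.prefH M (R.vb j) = (R.G.neighborSet j).ncard + 2 := by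
      rw [rank_eq_of_mem hMm hbcj]; exact R.prefH_bc j
    refine not_popular_votes hMm hM' {R.va i, R.vc i, R.vb i, R.va j, R.vc j, R.vb j} ?_
      {R.vd i, R.vd j, u1, u2} ?_ ?_ hM
    · intro v hv
      simp only [Finset.mem_insert, Finset.mem_singleton] at hv
      rcases hv with rfl | rfl | rfl | rfl | rfl | rfl
      · rw [hwai, hrai]; omega
      · rw [hwci, hrci]; omega
      · rw [hwbi, hrbi]; have := hbi2; omega
      · rw [hwaj, hraj]; omega
      · rw [hwcj, hrcj]; omega
      · rw [hwbj, hrbj]; have := hbj2; omega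
    · intro v hv
      rcases mUpd_loser hMm hM' hAX hv with hvX | ⟨w0, hwX, hvw⟩
      · simp only [hX, Set.mem_insert_iff, Set.mem_singleton_iff] at hvX
        rcases hvX with rfl | rfl | rfl | rfl | rfl | rfl | rfl | rfl | rfl | rfl
        · rw [hwai, hrai] at hv; omega
        · rw [hwbi, hrbi] at hv; have := hbi2; omega
        · rw [hwci, hrci] at hv; omega
        · exact Or.inl rfl
        · rw [hwaj, hraj] at hv; omega
        · rw [hwbj, hrbj] at hv; have := hbj2; omega
        · rw [hwcj, hrcj] at hv; omega
        · exact Or.inr (Or.inl rfl)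
        · exact Or.inr (Or.inr (Or.inl rfl))
        · exact Or.inr (Or.inr (Or.inr rfl))
      · simp only [hX, Set.mem_insert_iff, Set.mem_singleton_iff] at hwX
        rcases hwX with rfl | rfl | rfl | rfl | rfl | rfl | rfl | rfl | rfl | rfl
        · have := partner_unique hMm (mem_swap hvw) hdi
          subst this; exact Or.inl rfl
        · have := partner_unique hMm (mem_swap hvw) hbci
          subst this; rw [hwci, hrci] at hv; omega
        · have := partner_unique hMm (mem_swap hvw) (mem_swap hbci)
          subst this; rw [hwbi, hrbi] at hv; have := hbi2; omega
        · have := partner_unique hMm (mem_swap hvw) (mem_swap hdi)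
          subst this; rw [hwai, hrai] at hv; omega
        · have := partner_unique hMm (mem_swap hvw) hdj
          subst this; exact Or.inr (Or.inl rfl)
        · have := partner_unique hMm (mem_swap hvw) hbcj
          subst this; rw [hwcj, hrcj] at hv; omega
        · have := partner_unique hMm (mem_swap hvw) (mem_swap hbcj)
          subst this; rw [hwbj, hrbj] at hv; have := hbj2; omega
        · have := partner_unique hMm (mem_swap hvw) (mem_swap hdj)
          subst this; rw [hwaj, hraj] at hv; omega
        · have := partner_unique hMm (mem_swap hvw) huu
          subst this; exact Or.inr (Or.inr (Or.inr rfl))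
        · have := partner_unique hMm (mem_swap hvw) (mem_swap huu)
          subst this; exact Or.inr (Or.inr (Or.inl rfl))
    · have h2 : ({R.va i, R.vc i, R.vb i, R.va j, R.vc j, R.vb j} : Finset R.HV).card = 6 := by
        rw [Finset.card_insert_of_notMem (by simp [Reduction.va, Reduction.vb, Reduction.vc, hij, Subtype.ext_iff]),
          Finset.card_insert_of_notMem (by simp [Reduction.va, Reduction.vb, Reduction.vc, hij, Subtype.ext_iff]),
          Finset.card_insert_of_notMem (by simp [Reduction.va, Reduction.vb, Reduction.vc, hij, Subtype.ext_iff]),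
          Finset.card_insert_of_notMem (by simp [Reduction.va, Reduction.vb, Reduction.vc, hij, Subtype.ext_iff]),
          Finset.card_insert_of_notMem (by simp [Reduction.va, Reduction.vb, Reduction.vc, hij, Subtype.ext_iff]),
          Finset.card_singleton]
      have k1 := Set.ncard_insert_le (R.vd i) ({R.vd j, u1, u2} : Set R.HV)
      have k2 := Set.ncard_insert_le (R.vd j) ({u1, u2} : Set R.HV)
      have k3 := Set.ncard_insert_le u1 ({u2} : Set R.HV)
      have k4 : ({u2} : Set R.HV).ncard = 1 := Set.ncard_singleton _
      omega
  · -- easy case: u1 and u2 are both unmatched; add the edge between them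
    have hnu1 : ¬ Matched M u1 := by
      rintro ⟨z, hz⟩
      rcases R.adj_u_inv (R.adj_of_mem hMm hz) with rfl | rfl
      · exact huu hz
      · have := partner_unique hMm (mem_swap hz) hbci
        simp [hu1, Reduction.vu, Reduction.vc, Subtype.ext_iff] at this
    have hnu2 : ¬ Matched M u2 := by
      rintro ⟨z, hz⟩
      rcases R.adj_u_inv (R.adj_of_mem hMm hz) with rfl | rfl
      · exact huu (mem_swap hz)
      · have := partner_unique hMm (mem_swap hz) hbcj
        simp [hu2, Reduction.vu, Reduction.vc, Subtype.ext_iff] at this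
    set X : Set R.HV := {u1, u2} with hX
    set A : Set (Sym2 R.HV) := {s(u1, u2)} with hA
    have hAe : A ⊆ R.H.edgeSet := by
      intro e he; rw [hA, Set.mem_singleton_iff] at he; subst he
      exact R.H.mem_edgeSet.mpr (R.adj_uu hadj)
    have hAX : ∀ e ∈ A, ∀ v, v ∈ e → v ∈ X := by
      intro e he v hv; rw [hA, Set.mem_singleton_iff] at he; subst he
      rcases Sym2.mem_iff.1 hv with rfl | rfl
      · exact Or.inl rfl
      · exact Or.inr rfl
    have hAd : ∀ e ∈ A, ∀ e' ∈ A, e ≠ e' → ∀ v, v ∈ e → v ∉ e' := by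
      intro e he e' he' hne
      rw [hA, Set.mem_singleton_iff] at he he'; subst he; subst he'
      exact absurd rfl hne
    have hM' : IsMatching R.H (MUpd M X A) := mUpd_isMatching hMm hAe hAX hAd
    have hw_uu : s(u1, u2) ∈ MUpd M X A := Or.inr rfl
    have hwu1 : rank R.H R.prefH (MUpd M X A) u1 = 1 := by
      rw [rank_eq_of_mem hM' hw_uu]; exact R.prefH_uu hadj
    have hwu2 : rank R.H R.prefH (MUpd M X A) u2 = 1 := by
      rw [rank_eq_of_mem hM' (mem_swap hw_uu)]; exact R.prefH_uu hadj.symm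
    have hr1 : 1 < rank R.H R.prefH M u1 := by
      have := two_le_rank_of_unmatched (pref := R.prefH) hnu1 (R.adj_uu hadj); omega
    have hr2 : 1 < rank R.H R.prefH M u2 := by
      have := two_le_rank_of_unmatched (pref := R.prefH) hnu2 (R.adj_uu hadj.symm); omega
    refine not_popular_votes hMm hM' {u1, u2} ?_ ∅ ?_ ?_ hM
    · intro v hv
      simp only [Finset.mem_insert, Finset.mem_singleton] at hv
      rcases hv with rfl | rfl
      · rw [hwu1]; exact hr1
      · rw [hwu2]; exact hr2
    · intro v hv
      rcases mUpd_loser hMm hM' hAX hv with hvX | ⟨w0, hwX, hvw⟩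
      · simp only [hX, Set.mem_insert_iff, Set.mem_singleton_iff] at hvX
        rcases hvX with rfl | rfl
        · rw [hwu1] at hv; omega
        · rw [hwu2] at hv; omega
      · simp only [hX, Set.mem_insert_iff, Set.mem_singleton_iff] at hwX
        rcases hwX with rfl | rfl
        · exact absurd ⟨v, mem_swap hvw⟩ hnu1
        · exact absurd ⟨v, mem_swap hvw⟩ hnu2
    · have h2 : ({u1, u2} : Finset R.HV).card = 2 := by
        rw [Finset.card_insert_of_notMem (by simp [hu1, hu2, Reduction.vu, hij, Subtype.ext_iff]),
          Finset.card_singleton]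
      rw [Set.ncard_empty, h2]; omega
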